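/- For coprime p₊, p₋ ≥ 2 and μ ∈ ℂ, with h(μ) = μ(μ - α₀)/2 and the notation above: ∏_{i=1}^{p₊-1} ∏_{j=1}^{p₋-1} (μ - α_{i,j}) = ∏_{(r,s)} 2(h(μ) - h_{r,s}), where (r,s) runs over pairs with 1 ≤ r ≤ p₊-1, 1 ≤ s ≤ p₋-1, rp₋ + sp₊ < p₊p₋; i.e., the (p₊-1)(p₋-1) linear factors pair up into (p₊-1)(p₋-1)/2 quadratic factors 2(h(μ) - h_{r,s}). -/

import Mathlib

open Finset

lemma stmt_15_key (pp pm a b μ r s : ℂ) (hpp : pp ≠ 0) (hpm : pm ≠ 0)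
    (ha : a ^ 2 * pp = 2 * pm) (hb : b ^ 2 * pm = 2 * pp)
    (hab : a * b = -2) (h0 : pp * a + pm * b = 0) :
    (μ - ((1 - r) * a + (1 - s) * b) / 2) *
      (μ - ((1 - (pp - r)) * a + (1 - (pm - s)) * b) / 2)
    = 2 * (μ * (μ - (a + b)) / 2
        - ((r * pm - s * pp) ^ 2 - (pp - pm) ^ 2) / (4 * pp * pm)) := by
  field_simp
  linear_combination (8 * pp * pm * μ) * h0 + (4 * pm * (1 - r) * (1 - pp + r)) * ha
    + (4 * pp * (1 - s) * (1 - pm + s)) * hb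
    + (4 * pp * pm * (2 - 2 * r * s - pm + pm * r - pp + pp * s)) * hab

/-- For coprime `p₊, p₋ ≥ 2` and `μ ∈ ℂ`:
`∏_{i=1}^{p₊-1} ∏_{j=1}^{p₋-1} (μ - α_{i,j})` equals
`∏_{(r,s)} 2(h(μ) - h_{r,s})`, where `(r,s)` runs over `1 ≤ r ≤ p₊-1`,
`1 ≤ s ≤ p₋-1` with `rp₋ + sp₊ < p₊p₋`; here `α_{r,s} = ((1-r)α₊+(1-s)α₋)/2`
with `α₊ = √(2p₋/p₊)`, `α₋ = -√(2p₊/p₋)`, `h(μ) = μ(μ-(α₊+α₋))/2` and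
`h_{r,s} = ((rp₋-sp₊)² - (p₊-p₋)²)/(4p₊p₋)`. -/
theorem stmt_15 (pp pm : ℕ) (hpp : 2 ≤ pp) (hpm : 2 ≤ pm)
    (hcop : Nat.Coprime pp pm) (μ : ℂ) :
    (∏ i ∈ Finset.Icc 1 (pp - 1), ∏ j ∈ Finset.Icc 1 (pm - 1),
        (μ - ((1 - (i : ℂ)) * ((Real.sqrt (2 * pm / pp) : ℝ) : ℂ)
              + (1 - (j : ℂ)) * ((- Real.sqrt (2 * pp / pm) : ℝ) : ℂ)) / 2))
      = ∏ rs ∈ (Finset.Icc 1 (pp - 1) ×ˢ Finset.Icc 1 (pm - 1)).filter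
            (fun rs : ℕ × ℕ => rs.1 * pm + rs.2 * pp < pp * pm),
          2 * (μ * (μ - (((Real.sqrt (2 * pm / pp) : ℝ) : ℂ)
                        + ((- Real.sqrt (2 * pp / pm) : ℝ) : ℂ))) / 2
            - ((((rs.1 : ℂ) * pm - (rs.2 : ℂ) * pp) ^ 2 - ((pp : ℂ) - pm) ^ 2)
                / (4 * pp * pm))) := by
  have hppR : (0 : ℝ) < pp := by exact_mod_cast (by omega : 0 < pp)
  have hpmR : (0 : ℝ) < pm := by exact_mod_cast (by omega : 0 < pm)
  set c : ℝ := Real.sqrt (2 * pm / pp) with hc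
  set d : ℝ := Real.sqrt (2 * pp / pm) with hd
  have hc2 : c ^ 2 = 2 * pm / pp := Real.sq_sqrt (by positivity)
  have hd2 : d ^ 2 = 2 * pp / pm := Real.sq_sqrt (by positivity)
  have hcd : c * d = 2 := by
    rw [hc, hd, ← Real.sqrt_mul (by positivity),
      show (2 * (pm:ℝ) / pp) * (2 * pp / pm) = 2 ^ 2 by field_simp,
      Real.sqrt_sq (by norm_num)]
  have h0 : (pp : ℝ) * c = pm * d := by
    have h1 : ((pp : ℝ) * c) ^ 2 = ((pm : ℝ) * d) ^ 2 := by
      rw [mul_pow, mul_pow, hc2, hd2]; field_simp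
    calc (pp : ℝ) * c = Real.sqrt (((pp : ℝ) * c) ^ 2) :=
          (Real.sqrt_sq (by positivity)).symm
      _ = Real.sqrt (((pm : ℝ) * d) ^ 2) := by rw [h1]
      _ = pm * d := Real.sqrt_sq (by positivity)
  -- complex versions
  have hppC : (pp : ℂ) ≠ 0 := Nat.cast_ne_zero.mpr (by omega)
  have hpmC : (pm : ℂ) ≠ 0 := Nat.cast_ne_zero.mpr (by omega)
  have ha' : ((c : ℂ)) ^ 2 * pp = 2 * pm := by
    have : ((c ^ 2 * pp : ℝ) : ℂ) = ((2 * pm / pp * pp : ℝ) : ℂ) := by rw [hc2]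
    push_cast at this
    rw [this]; field_simp
  have hb' : (-(d : ℂ)) ^ 2 * pm = 2 * pp := by
    have h1 : ((d ^ 2 * pm : ℝ) : ℂ) = ((2 * pp / pm * pm : ℝ) : ℂ) := by rw [hd2]
    push_cast at h1
    rw [neg_sq, h1]; field_simp
  have hab' : (c : ℂ) * (-d : ℂ) = -2 := by
    have : ((c * d : ℝ) : ℂ) = 2 := by rw [hcd]; norm_num
    push_cast at this ⊢
    linear_combination -this
  have h0' : (pp : ℂ) * c + pm * (-d : ℂ) = 0 := by
    have : ((pp * c : ℝ) : ℂ) = ((pm * d : ℝ) : ℂ) := by rw [h0]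
    push_cast at this ⊢
    linear_combination this
  -- set up the combinatorics
  set S : Finset (ℕ × ℕ) := Finset.Icc 1 (pp - 1) ×ˢ Finset.Icc 1 (pm - 1) with hS
  set T : Finset (ℕ × ℕ) :=
    S.filter (fun rs : ℕ × ℕ => rs.1 * pm + rs.2 * pp < pp * pm) with hT
  set F : ℕ × ℕ → ℂ := fun p =>
    μ - ((1 - (p.1 : ℂ)) * ((c : ℝ) : ℂ) + (1 - (p.2 : ℂ)) * ((-d : ℝ) : ℂ)) / 2
    with hF
  have hLHS : (∏ i ∈ Finset.Icc 1 (pp - 1), ∏ j ∈ Finset.Icc 1 (pm - 1),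
      (μ - ((1 - (i : ℂ)) * ((c : ℝ) : ℂ) + (1 - (j : ℂ)) * ((-d : ℝ) : ℂ)) / 2))
      = ∏ p ∈ S, F p := by
    rw [hS, Finset.prod_product]
  rw [hLHS]
  -- the key inequality from coprimality
  have hne : ∀ r s : ℕ, 1 ≤ r → r ≤ pp - 1 → r * pm + s * pp ≠ pp * pm := by
    intro r s h1 h2 h
    have hs : s * pp ≤ pp * pm := by omega
    have hspm : s ≤ pm := by
      by_contra hx
      push_neg at hx
      have h1 : (pm + 1) * pp ≤ s * pp := Nat.mul_le_mul_right _ (by omega)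
      have h2 : (pm + 1) * pp = pm * pp + pp := by ring
      have h3 : pm * pp = pp * pm := Nat.mul_comm _ _
      omega
    have hdvd : pp ∣ r * pm := ⟨pm - s, by
      have : r * pm = pp * pm - s * pp := by omega
      rw [this, Nat.mul_sub, Nat.mul_comm s pp]⟩
    have := (Nat.Coprime.dvd_of_dvd_mul_right hcop hdvd)
    have := Nat.le_of_dvd (by omega) this
    omega
  have hmem : ∀ p : ℕ × ℕ, p ∈ S ↔
      (1 ≤ p.1 ∧ p.1 ≤ pp - 1 ∧ 1 ≤ p.2 ∧ p.2 ≤ pm - 1) := by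
    intro p
    simp [hS, Finset.mem_product, Finset.mem_Icc, and_assoc]
  set σ : ℕ × ℕ → ℕ × ℕ := fun p => (pp - p.1, pm - p.2) with hσ
  have hTmem : ∀ p : ℕ × ℕ, p ∈ T ↔
      ((1 ≤ p.1 ∧ p.1 ≤ pp - 1 ∧ 1 ≤ p.2 ∧ p.2 ≤ pm - 1) ∧
        p.1 * pm + p.2 * pp < pp * pm) := by
    intro p
    rw [hT, Finset.mem_filter, hmem]
  have hunion : S = T ∪ T.image σ := by
    ext p
    rw [Finset.mem_union, Finset.mem_image, hmem, hTmem]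
    constructor
    · rintro ⟨h1, h2, h3, h4⟩
      by_cases hlt : p.1 * pm + p.2 * pp < pp * pm
      · exact Or.inl ⟨⟨h1, h2, h3, h4⟩, hlt⟩
      · refine Or.inr ⟨σ p, ?_, ?_⟩
        · rw [hTmem]
          have hne' := hne p.1 p.2 h1 h2
          have hb1 : p.1 * pm + p.2 * pp > pp * pm := by omega
          constructor
          · simp only [hσ]
            omega
          · simp only [hσ]
            have e1 : (pp - p.1) * pm + p.1 * pm = pp * pm := by
              rw [← Nat.add_mul, Nat.sub_add_cancel (by omega)]
            have e2 : (pm - p.2) * pp + p.2 * pp = pm * pp := by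
              rw [← Nat.add_mul, Nat.sub_add_cancel (by omega)]
            have h3 : pm * pp = pp * pm := Nat.mul_comm _ _
            omega
        · simp only [hσ]
          ext <;> simp <;> omega
    · rintro (⟨⟨h1, h2, h3, h4⟩, _⟩ | ⟨q, hq, rfl⟩)
      · exact ⟨h1, h2, h3, h4⟩
      · rw [hTmem] at hq
        obtain ⟨⟨h1, h2, h3, h4⟩, _⟩ := hq
        simp only [hσ]
        refine ⟨by omega, by omega, by omega, by omega⟩
  have hdisj : Disjoint T (T.image σ) := by
    rw [Finset.disjoint_left]
    intro p hp hp'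
    rw [Finset.mem_image] at hp'
    obtain ⟨q, hq, hqp⟩ := hp'
    rw [hTmem] at hp hq
    obtain ⟨⟨h1, h2, h3, h4⟩, h5⟩ := hp
    obtain ⟨⟨g1, g2, g3, g4⟩, g5⟩ := hq
    have hp1 : p.1 = pp - q.1 := by rw [← hqp]
    have hp2 : p.2 = pm - q.2 := by rw [← hqp]
    have e1 : (pp - q.1) * pm + q.1 * pm = pp * pm := by
      rw [← Nat.add_mul, Nat.sub_add_cancel (by omega)]
    have e2 : (pm - q.2) * pp + q.2 * pp = pm * pp := by
      rw [← Nat.add_mul, Nat.sub_add_cancel (by omega)]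
    have h3 : pm * pp = pp * pm := Nat.mul_comm _ _
    rw [hp1, hp2] at h5
    omega
  have hinj : ∀ x ∈ T, ∀ y ∈ T, σ x = σ y → x = y := by
    intro x hx y hy hxy
    rw [hTmem] at hx hy
    obtain ⟨⟨h1, h2, h3, h4⟩, _⟩ := hx
    obtain ⟨⟨g1, g2, g3, g4⟩, _⟩ := hy
    have e1 : pp - x.1 = pp - y.1 := congrArg Prod.fst hxy
    have e2 : pm - x.2 = pm - y.2 := congrArg Prod.snd hxy
    ext <;> omega
  rw [hunion, Finset.prod_union hdisj, Finset.prod_image hinj,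
    ← Finset.prod_mul_distrib]
  apply Finset.prod_congr rfl
  intro p hp
  rw [hTmem] at hp
  obtain ⟨⟨h1, h2, h3, h4⟩, _⟩ := hp
  have hx1 : p.1 ≤ pp := by omega
  have hx2 : p.2 ≤ pm := by omega
  have cast1 : ((pp - p.1 : ℕ) : ℂ) = (pp : ℂ) - p.1 := by
    push_cast [Nat.cast_sub hx1]; ring
  have cast2 : ((pm - p.2 : ℕ) : ℂ) = (pm : ℂ) - p.2 := by
    push_cast [Nat.cast_sub hx2]; ring
  have key := stmt_15_key (pp : ℂ) (pm : ℂ) ((c : ℝ) : ℂ) (-(d : ℝ) : ℂ) μ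
    (p.1 : ℂ) (p.2 : ℂ) hppC hpmC (by exact ha')
    (by linear_combination hb')
    (by linear_combination hab')
    (by linear_combination h0')
  simp only [hF, hσ]
  push_cast [cast1, cast2] at key ⊢
  linear_combination key
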